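/- Let q be a prime power and s an integer with 0 < s < q-2 such that (s+2) divides q. If m^s(3,q) ≥ (s+1)(q+1), then m^s(3,q) = (s+1)(q+1) + 1. -/
import Mathlib


open scoped Classical

noncomputable section

/-- The number of points of the multiset `K` of projective points lying in the
submodule (flat) `W`, counted with multiplicity. -/
def mPointsOn {F V : Type*} [Field F] [AddCommGroup V] [Module F V]
    (K : Multiset (Projectivization F V)) (W : Submodule F V) : ℕ :=
  Multiset.card (K.filter (fun P => P.submodule ≤ W))

/-- The number of points of the finite set `K` of projective points lying in the
submodule (flat) `W`. -/
def pointsOn {F V : Type*} [Field F] [AddCommGroup V] [Module F V]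
    (K : Finset (Projectivization F V)) (W : Submodule F V) : ℕ :=
  (K.filter (fun P => P.submodule ≤ W)).card

/-- `W` is a hyperplane of the projective space `PG(V)`, i.e. a linear subspace of
codimension one (projective codimension one flat). -/
def IsHyp (F : Type*) [Field F] {V : Type*} [AddCommGroup V] [Module F V]
    (W : Submodule F V) : Prop :=
  Module.finrank F W = Module.finrank F V - 1

/-- An `(n, r)`-multi-arc: a multiset of `n > r` projective points such that every
hyperplane contains at most `r` of them (with multiplicity) and some hyperplane
contains exactly `r` of them. -/
def IsMultiArc {F V : Type*} [Field F] [AddCommGroup V] [Module F V]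
    (n r : ℕ) (K : Multiset (Projectivization F V)) : Prop :=
  Multiset.card K = n ∧ r < n ∧
    (∀ W : Submodule F V, IsHyp F W → mPointsOn K W ≤ r) ∧
    (∃ W : Submodule F V, IsHyp F W ∧ mPointsOn K W = r)

/-- An `(n, r)`-arc: a set of `n > r` projective points such that every hyperplane
contains at most `r` of them and some hyperplane contains exactly `r` of them. -/
def IsArc {F V : Type*} [Field F] [AddCommGroup V] [Module F V]
    (n r : ℕ) (K : Finset (Projectivization F V)) : Prop :=
  K.card = n ∧ r < n ∧
    (∀ W : Submodule F V, IsHyp F W → pointsOn K W ≤ r) ∧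
    (∃ W : Submodule F V, IsHyp F W ∧ pointsOn K W = r)

/-- A complete `(n, r)`-arc: one admitting no extension to an `(n+1, r)`-arc. -/
def IsCompleteArc {F V : Type*} [Field F] [AddCommGroup V] [Module F V]
    (n r : ℕ) (K : Finset (Projectivization F V)) : Prop :=
  IsArc n r K ∧ ∀ P ∉ K, ¬ IsArc (n + 1) r (insert P K)

/-- A hyperplane is a secant of the arc `K` (relative to the parameter `r`) if it
contains exactly `r` points of `K`. -/
def IsSecant {F V : Type*} [Field F] [AddCommGroup V] [Module F V]
    (K : Finset (Projectivization F V)) (r : ℕ) (W : Submodule F V) : Prop :=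
  IsHyp F W ∧ pointsOn K W = r

/-- A hyperplane is a tangent of the arc `K` (relative to the parameter `r`) if it
contains a positive number, fewer than `r`, of points of `K`. -/
def IsTangent {F V : Type*} [Field F] [AddCommGroup V] [Module F V]
    (K : Finset (Projectivization F V)) (r : ℕ) (W : Submodule F V) : Prop :=
  IsHyp F W ∧ 0 < pointsOn K W ∧ pointsOn K W < r

/-- `m^s(k,q)`: the maximum size of a complete `(n, k+s-1)`-arc in `PG(k-1,q)`,
where the projective space is coordinatized over the field `F` of order `q`. -/
def mPow (F : Type*) [Field F] (k s : ℕ) : ℕ :=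
  sSup {n | ∃ K : Finset (Projectivization F (Fin k → F)), IsCompleteArc n (k + s - 1) K}


set_option linter.unusedSectionVars false
set_option maxHeartbeats 1600000

open Module Finset

namespace ArcAux

noncomputable instance {F : Type*} [Field F] {V : Type*} [AddCommGroup V] [Module F V]
    [Fintype V] : Fintype (Projectivization F V) :=
  Fintype.ofInjective Projectivization.submodule Projectivization.submodule_injective

variable {F : Type*} [Field F] [Fintype F]

section General

variable {V : Type*} [AddCommGroup V] [Module F V] [Fintype V]

lemma mk_eq_iff_mem (P : Projectivization F V) (v : V) (hv : v ≠ 0) :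
    Projectivization.mk F v hv = P ↔ v ∈ P.submodule := by
  induction P with
  | h w hw =>
    rw [Projectivization.mk_eq_mk_iff', Projectivization.submodule_mk,
      Submodule.mem_span_singleton]

lemma card_points_on_mul [Nontrivial V] (W : Submodule F V) :
    (univ.filter (fun P : Projectivization F V => P.submodule ≤ W)).card * (Fintype.card F - 1)
      = Fintype.card F ^ finrank F W - 1 := by
  classical
  set T := univ.filter (fun P : Projectivization F V => P.submodule ≤ W) with hT
  set S := (univ.filter (fun v : V => v ∈ W)).erase 0 with hS
  have hPn : Nonempty (Projectivization F V) := by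
    obtain ⟨v, hv⟩ := exists_ne (0 : V)
    exact ⟨Projectivization.mk F v hv⟩
  set f : V → Projectivization F V := fun v =>
    if h : v = 0 then Classical.arbitrary _ else Projectivization.mk F v h with hf
  have hmaps : ∀ v ∈ S, f v ∈ T := by
    intro v hv
    simp only [hS, mem_erase, mem_filter, mem_univ, true_and] at hv
    simp only [hT, mem_filter, mem_univ, true_and, hf]
    rw [dif_neg hv.1, Projectivization.submodule_mk, Submodule.span_singleton_le_iff_mem]
    exact hv.2
  have hcard := Finset.card_eq_sum_card_fiberwise hmaps
  have hfib : ∀ P ∈ T, (S.filter (fun v => f v = P)).card = Fintype.card F - 1 := by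
    intro P hP
    have : S.filter (fun v => f v = P) = (univ.filter (fun v : V => v ∈ P.submodule)).erase 0 := by
      ext v
      simp only [hS, mem_filter, mem_erase, mem_univ, true_and, hf]
      constructor
      · rintro ⟨⟨hv0, -⟩, hfv⟩
        rw [dif_neg hv0] at hfv
        exact ⟨hv0, (mk_eq_iff_mem P v hv0).1 hfv⟩
      · rintro ⟨hv0, hvP⟩
        simp only [hT, mem_filter, mem_univ, true_and] at hP
        refine ⟨⟨hv0, hP hvP⟩, ?_⟩
        rw [dif_neg hv0]
        exact (mk_eq_iff_mem P v hv0).2 hvP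
    rw [this, Finset.card_erase_of_mem (by simp)]
    have h1 : (univ.filter (fun v : V => v ∈ P.submodule)).card = Fintype.card P.submodule := by
      simp [Fintype.card_subtype]
    rw [h1, card_eq_pow_finrank (K := F), P.finrank_submodule, pow_one]
  have hScard : S.card = Fintype.card F ^ finrank F W - 1 := by
    rw [hS, Finset.card_erase_of_mem (by simp)]
    have h1 : (univ.filter (fun v : V => v ∈ W)).card = Fintype.card W := by
      simp [Fintype.card_subtype]
    rw [h1, card_eq_pow_finrank (K := F)]
  rw [hcard, Finset.sum_congr rfl hfib, Finset.sum_const, smul_eq_mul] at hScard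
  exact hScard

end General

lemma cancel_helper {a b q d : ℕ} (h2 : 2 ≤ q) (h : a * (q - 1) = q ^ d - 1)
    (h' : b * (q - 1) + 1 = q ^ d) : a = b := by
  have hq1 : 1 ≤ q ^ d := Nat.one_le_pow _ _ (by omega)
  have h'' : a * (q - 1) + 1 = q ^ d := by omega
  have h3 : a * (q - 1) = b * (q - 1) := by omega
  exact Nat.eq_of_mul_eq_mul_right (by omega) h3

lemma sq_identity {q : ℕ} (h2 : 2 ≤ q) : (q + 1) * (q - 1) + 1 = q ^ 2 := by
  obtain ⟨m, rfl⟩ : ∃ m, q = m + 2 := ⟨q - 2, by omega⟩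
  have h : m + 2 - 1 = m + 1 := rfl
  rw [h]; ring

lemma cube_identity {q : ℕ} (h2 : 2 ≤ q) : (q ^ 2 + q + 1) * (q - 1) + 1 = q ^ 3 := by
  obtain ⟨m, rfl⟩ : ∃ m, q = m + 2 := ⟨q - 2, by omega⟩
  have h : m + 2 - 1 = m + 1 := rfl
  rw [h]; ring

lemma finrank_V3 : finrank F (Fin 3 → F) = 3 := by simp

lemma isHyp_iff (W : Submodule F (Fin 3 → F)) : IsHyp F W ↔ finrank F W = 2 := by
  rw [IsHyp, finrank_V3]

lemma card_pts {q : ℕ} (hq : Fintype.card F = q) :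
    (univ : Finset (Projectivization F (Fin 3 → F))).card = q ^ 2 + q + 1 := by
  have h2 : 2 ≤ q := hq ▸ Fintype.one_lt_card
  have h := card_points_on_mul (F := F) (⊤ : Submodule F (Fin 3 → F))
  have htop : finrank F (⊤ : Submodule F (Fin 3 → F)) = 3 := by
    rw [finrank_top]; simp
  rw [htop, hq] at h
  refine cancel_helper h2 ?_ (cube_identity h2)
  simpa using h

lemma pointsOn_line {q : ℕ} (hq : Fintype.card F = q) {W : Submodule F (Fin 3 → F)}
    (hW : IsHyp F W) :
    pointsOn (univ : Finset (Projectivization F (Fin 3 → F))) W = q + 1 := by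
  have h2 : 2 ≤ q := hq ▸ Fintype.one_lt_card
  have h := card_points_on_mul (F := F) W
  rw [(isHyp_iff W).1 hW, hq] at h
  exact cancel_helper h2 h (sq_identity h2)

lemma submodule_eq_of_le {P : Projectivization F (Fin 3 → F)} {W : Submodule F (Fin 3 → F)}
    (h : finrank F W = 1) (hP : W ≤ P.submodule) : W = P.submodule :=
  Submodule.eq_of_le_of_finrank_eq hP (by rw [P.finrank_submodule, h])

lemma point_eq_of_le {P Q : Projectivization F (Fin 3 → F)} {W : Submodule F (Fin 3 → F)}
    (h : finrank F W = 1) (hP : W ≤ P.submodule) (hQ : W ≤ Q.submodule) : P = Q :=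
  Projectivization.submodule_injective
    ((submodule_eq_of_le h hP).symm.trans (submodule_eq_of_le h hQ))

/-- unique line through two distinct points -/
lemma exists_unique_line {P Q : Projectivization F (Fin 3 → F)} (hPQ : P ≠ Q) :
    ∃! W : Submodule F (Fin 3 → F), IsHyp F W ∧ P.submodule ≤ W ∧ Q.submodule ≤ W := by
  have hinf : P.submodule ⊓ Q.submodule = ⊥ := by
    by_contra h
    have h1 : finrank F (P.submodule ⊓ Q.submodule : Submodule F (Fin 3 → F)) ≠ 0 := by
      rwa [ne_eq, Submodule.finrank_eq_zero]
    have h2 := Submodule.finrank_mono (inf_le_left (a := P.submodule) (b := Q.submodule))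
    rw [P.finrank_submodule] at h2
    have h3 : finrank F (P.submodule ⊓ Q.submodule : Submodule F (Fin 3 → F)) = 1 := by omega
    exact hPQ (point_eq_of_le h3 inf_le_left inf_le_right)
  have hsup : finrank F (P.submodule ⊔ Q.submodule : Submodule F (Fin 3 → F)) = 2 := by
    have := Submodule.finrank_sup_add_finrank_inf_eq P.submodule Q.submodule
    rw [hinf, finrank_bot, P.finrank_submodule, Q.finrank_submodule] at this
    omega
  refine ⟨P.submodule ⊔ Q.submodule, ⟨(isHyp_iff _).2 hsup, le_sup_left, le_sup_right⟩, ?_⟩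
  rintro W ⟨hW, hPW, hQW⟩
  exact (Submodule.eq_of_le_of_finrank_eq (sup_le hPW hQW)
    (by rw [hsup, (isHyp_iff _).1 hW])).symm

/-- unique point on two distinct lines -/
lemma exists_unique_point {W₁ W₂ : Submodule F (Fin 3 → F)} (h1 : IsHyp F W₁) (h2 : IsHyp F W₂)
    (hne : W₁ ≠ W₂) :
    ∃! P : Projectivization F (Fin 3 → F), P.submodule ≤ W₁ ∧ P.submodule ≤ W₂ := by
  rw [isHyp_iff] at h1 h2
  have hlt : W₁ < W₁ ⊔ W₂ := by
    rcases lt_or_eq_of_le (le_sup_left : W₁ ≤ W₁ ⊔ W₂) with h | h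
    · exact h
    · exact absurd (Submodule.eq_of_le_of_finrank_eq (le_sup_right : W₂ ≤ W₁ ⊔ W₂)
        (by rw [← h, h1, h2])).symm (by rw [← h] at *; exact fun hh => hne hh)
  have hsup : finrank F (W₁ ⊔ W₂ : Submodule F (Fin 3 → F)) = 3 := by
    have hle := Submodule.finrank_le (W₁ ⊔ W₂ : Submodule F (Fin 3 → F))
    rw [finrank_V3] at hle
    have := Submodule.finrank_lt_finrank_of_lt hlt
    omega
  have hinf : finrank F (W₁ ⊓ W₂ : Submodule F (Fin 3 → F)) = 1 := by
    have := Submodule.finrank_sup_add_finrank_inf_eq W₁ W₂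
    rw [hsup, h1, h2] at this
    omega
  refine ⟨Projectivization.mk'' _ hinf, ?_, ?_⟩
  · show (Projectivization.mk'' _ hinf).submodule ≤ W₁ ∧ (Projectivization.mk'' _ hinf).submodule ≤ W₂
    rw [Projectivization.submodule_mk'']
    exact ⟨inf_le_left, inf_le_right⟩
  · rintro P ⟨hP1, hP2⟩
    have hPeq : P.submodule = W₁ ⊓ W₂ :=
      Submodule.eq_of_le_of_finrank_eq (le_inf hP1 hP2) (by rw [P.finrank_submodule, hinf])
    refine Projectivization.submodule_injective ?_
    rw [hPeq, Projectivization.submodule_mk'']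

lemma double_count (A : Finset (Projectivization F (Fin 3 → F)))
    (B : Finset (Submodule F (Fin 3 → F))) :
    ∑ W ∈ B, pointsOn A W
      = ∑ P ∈ A, (B.filter (fun W => P.submodule ≤ W)).card := by
  simp_rw [pointsOn, Finset.card_filter]
  rw [Finset.sum_comm]

/-- the pencil of lines through a point -/
def pencil (P : Projectivization F (Fin 3 → F)) : Finset (Submodule F (Fin 3 → F)) :=
  univ.filter (fun W => IsHyp F W ∧ P.submodule ≤ W)

lemma pencil_filter_self (P : Projectivization F (Fin 3 → F)) :
    (pencil P).filter (fun W => P.submodule ≤ W) = pencil P := by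
  apply Finset.filter_true_of_mem
  intro W hW
  exact ((Finset.mem_filter.1 hW).2).2

lemma pencil_filter_ne {P R : Projectivization F (Fin 3 → F)} (hne : R ≠ P) :
    ((pencil P).filter (fun W => R.submodule ≤ W)).card = 1 := by
  obtain ⟨W₀, ⟨hW₀h, hW₀P, hW₀R⟩, huniq⟩ := exists_unique_line hne.symm
  rw [Finset.card_eq_one]
  refine ⟨W₀, ?_⟩
  ext W
  simp only [pencil, Finset.mem_filter, Finset.mem_univ, true_and, Finset.mem_singleton]
  constructor
  · rintro ⟨⟨hWh, hWP⟩, hWR⟩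
    exact huniq W ⟨hWh, hWP, hWR⟩
  · rintro rfl
    exact ⟨⟨hW₀h, hW₀P⟩, hW₀R⟩

lemma pencil_card {q : ℕ} (hq : Fintype.card F = q) (P : Projectivization F (Fin 3 → F)) :
    (pencil P).card = q + 1 := by
  have h2 : 2 ≤ q := hq ▸ Fintype.one_lt_card
  have hdc := double_count (univ : Finset (Projectivization F (Fin 3 → F))) (pencil P)
  have hlhs : ∑ W ∈ pencil P, pointsOn (univ : Finset (Projectivization F (Fin 3 → F))) W
      = (pencil P).card * (q + 1) := by
    rw [Finset.sum_congr rfl (fun W hW => pointsOn_line hq ((Finset.mem_filter.1 hW).2).1),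
      Finset.sum_const, smul_eq_mul]
  have hrhs : ∑ R : Projectivization F (Fin 3 → F),
      ((pencil P).filter (fun W => R.submodule ≤ W)).card
      = (pencil P).card + (q ^ 2 + q) := by
    rw [← Finset.add_sum_erase _ _ (Finset.mem_univ P), pencil_filter_self]
    congr 1
    rw [Finset.sum_congr rfl (fun R hR => pencil_filter_ne (Finset.mem_erase.1 hR).1),
      Finset.sum_const, smul_eq_mul, mul_one, Finset.card_erase_of_mem (Finset.mem_univ P),
      card_pts hq]
    omega
  rw [hlhs, hrhs] at hdc
  -- a * (q+1) = a + (q^2 + q)  ⇒  a = q + 1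
  have key : (pencil P).card * q = (q + 1) * q := by
    have e1 : (pencil P).card * (q + 1) = (pencil P).card * q + (pencil P).card := by ring
    have e2 : (q + 1) * q = q ^ 2 + q := by ring
    rw [e1] at hdc
    omega
  exact Nat.eq_of_mul_eq_mul_right (by omega) key

lemma sum_pencil {q : ℕ} (hq : Fintype.card F = q) (K : Finset (Projectivization F (Fin 3 → F)))
    (P : Projectivization F (Fin 3 → F)) :
    ∑ W ∈ pencil P, pointsOn K W = K.card + (if P ∈ K then q else 0) := by
  rw [double_count]
  have hterm : ∀ R ∈ K, ((pencil P).filter (fun W => R.submodule ≤ W)).card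
      = 1 + (if R = P then q else 0) := by
    intro R hR
    by_cases h : R = P
    · subst h
      rw [pencil_filter_self, pencil_card hq, if_pos rfl]
      omega
    · rw [pencil_filter_ne h, if_neg h]
  rw [Finset.sum_congr rfl hterm, Finset.sum_add_distrib, Finset.sum_const, smul_eq_mul, mul_one,
    Finset.sum_ite_eq' K P (fun _ => q)]

end ArcAux

namespace ArcAux

variable {F : Type*} [Field F] [Fintype F] {q r : ℕ}

instance : Nonempty (Projectivization F (Fin 3 → F)) := by
  obtain ⟨v, hv⟩ := exists_ne (0 : Fin 3 → F)
  exact ⟨Projectivization.mk F v hv⟩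

lemma arc_card_le (hq : Fintype.card F = q) (hr : 1 ≤ r)
    {K : Finset (Projectivization F (Fin 3 → F))} (hK : K.Nonempty)
    (hmax : ∀ W : Submodule F (Fin 3 → F), IsHyp F W → pointsOn K W ≤ r) :
    K.card ≤ (r - 1) * (q + 1) + 1 := by
  obtain ⟨P, hP⟩ := hK
  have hsum := sum_pencil hq K P
  rw [if_pos hP] at hsum
  have hbd : ∑ W ∈ pencil P, pointsOn K W ≤ (pencil P).card * r := by
    apply Finset.sum_le_card_nsmul
    intro W hW
    exact hmax W ((Finset.mem_filter.1 hW).2).1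
  rw [pencil_card hq, hsum] at hbd
  have e : (r - 1) * (q + 1) + (q + 1) = r * (q + 1) := by
    obtain ⟨r', rfl⟩ : ∃ r', r = r' + 1 := ⟨r - 1, by omega⟩
    simp [Nat.succ_sub_one]
    ring
  have e2 : (q + 1) * r = r * (q + 1) := by ring
  linarith

/-- the set of (r-1)-secants of K -/
def tSet (K : Finset (Projectivization F (Fin 3 → F))) (r : ℕ) :
    Finset (Submodule F (Fin 3 → F)) :=
  univ.filter (fun W => IsHyp F W ∧ pointsOn K W = r - 1)

section Structure

variable (hq : Fintype.card F = q) (hr3 : 3 ≤ r)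
  {K : Finset (Projectivization F (Fin 3 → F))}
  (hcard : K.card = (r - 1) * (q + 1))
  (hmax : ∀ W : Submodule F (Fin 3 → F), IsHyp F W → pointsOn K W ≤ r)

include hq hr3 hcard hmax

lemma tangent_unique {P : Projectivization F (Fin 3 → F)} (hP : P ∈ K) :
    ∃ W₀ ∈ pencil P, pointsOn K W₀ = r - 1 ∧
      ∀ W ∈ pencil P, W ≠ W₀ → pointsOn K W = r := by
  have hsum := sum_pencil hq K P
  rw [if_pos hP, hcard] at hsum
  have hpc := pencil_card hq P
  have hle : ∀ W ∈ pencil P, pointsOn K W ≤ r := fun W hW =>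
    hmax W ((Finset.mem_filter.1 hW).2).1
  have hg : ∑ W ∈ pencil P, (r - pointsOn K W) = 1 := by
    have h1 : ∑ W ∈ pencil P, ((r - pointsOn K W) + pointsOn K W) = (q + 1) * r := by
      rw [Finset.sum_congr rfl (fun W hW => Nat.sub_add_cancel (hle W hW)),
        Finset.sum_const, smul_eq_mul, hpc]
    rw [Finset.sum_add_distrib, hsum] at h1
    have e : (r - 1) * (q + 1) + (q + 1) = r * (q + 1) := by
      obtain ⟨r', rfl⟩ : ∃ r', r = r' + 1 := ⟨r - 1, by omega⟩
      simp [Nat.succ_sub_one]; ring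
    have e2 : (q + 1) * r = r * (q + 1) := by ring
    linarith
  have hex : ∃ W₀ ∈ pencil P, r - pointsOn K W₀ ≠ 0 := by
    by_contra h
    push_neg at h
    rw [Finset.sum_congr rfl h, Finset.sum_const, smul_eq_mul, mul_zero] at hg
    exact one_ne_zero hg.symm
  obtain ⟨W₀, hW₀p, hW₀⟩ := hex
  have hsplit : (r - pointsOn K W₀) + ∑ W ∈ (pencil P).erase W₀, (r - pointsOn K W) = 1 := by
    rw [← hg]
    exact Finset.add_sum_erase (pencil P) (fun W => r - pointsOn K W) hW₀p
  have hW₀1 : r - pointsOn K W₀ = 1 := by omega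
  have hrest : ∑ W ∈ (pencil P).erase W₀, (r - pointsOn K W) = 0 := by omega
  refine ⟨W₀, hW₀p, ?_, ?_⟩
  · have := hle W₀ hW₀p; omega
  · intro W hW hne
    have hmem : W ∈ (pencil P).erase W₀ := Finset.mem_erase.2 ⟨hne, hW⟩
    have := (Finset.sum_eq_zero_iff.1 hrest) W hmem
    have := hle W hW
    omega

lemma tSet_point_filter {P : Projectivization F (Fin 3 → F)} (hP : P ∈ K) :
    ((tSet K r).filter (fun W => P.submodule ≤ W)).card = 1 := by
  obtain ⟨W₀, hW₀p, hW₀v, hother⟩ := tangent_unique hq hr3 hcard hmax hP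
  rw [Finset.card_eq_one]
  refine ⟨W₀, ?_⟩
  ext W
  simp only [tSet, pencil, Finset.mem_filter, Finset.mem_univ, true_and,
    Finset.mem_singleton] at *
  constructor
  · rintro ⟨⟨hWh, hWv⟩, hWP⟩
    by_contra hne
    have := hother W ⟨hWh, hWP⟩ hne
    omega
  · rintro rfl
    exact ⟨⟨hW₀p.1, hW₀v⟩, hW₀p.2⟩

lemma tSet_card : (tSet K r).card = q + 1 := by
  have hdc := double_count K (tSet K r)
  have hlhs : ∑ W ∈ tSet K r, pointsOn K W = (tSet K r).card * (r - 1) := by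
    rw [Finset.sum_congr rfl (fun W hW => ((Finset.mem_filter.1 hW).2).2),
      Finset.sum_const, smul_eq_mul]
  have hrhs : ∑ P ∈ K, ((tSet K r).filter (fun W => P.submodule ≤ W)).card = K.card := by
    rw [Finset.sum_congr rfl (fun P hP => tSet_point_filter hq hr3 hcard hmax hP),
      Finset.sum_const, smul_eq_mul, mul_one]
  rw [hlhs, hrhs, hcard] at hdc
  have : (r - 1) * (q + 1) = (q + 1) * (r - 1) := by ring
  rw [this] at hdc
  exact Nat.eq_of_mul_eq_mul_right (by omega) hdc

lemma trichotomy {W : Submodule F (Fin 3 → F)} (hW : IsHyp F W) :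
    pointsOn K W = 0 ∨ pointsOn K W = r - 1 ∨ pointsOn K W = r := by
  by_cases h0 : pointsOn K W = 0
  · exact Or.inl h0
  · obtain ⟨P, hP⟩ := Finset.card_ne_zero.1 h0
    rw [Finset.mem_filter] at hP
    obtain ⟨W₀, hW₀p, hW₀v, hother⟩ := tangent_unique hq hr3 hcard hmax hP.1
    have hWp : W ∈ pencil P := by
      simp only [pencil, Finset.mem_filter, Finset.mem_univ, true_and]
      exact ⟨hW, hP.2⟩
    by_cases he : W = W₀
    · exact Or.inr (Or.inl (he ▸ hW₀v))
    · exact Or.inr (Or.inr (hother W hWp he))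

end Structure

end ArcAux

namespace ArcAux

variable {F : Type*} [Field F] [Fintype F] {q r : ℕ}

/-- the intersection point of two lines (with junk value otherwise) -/
noncomputable def meetPt (p : Submodule F (Fin 3 → F) × Submodule F (Fin 3 → F)) :
    Projectivization F (Fin 3 → F) :=
  if h : IsHyp F p.1 ∧ IsHyp F p.2 ∧ p.1 ≠ p.2 then
    (exists_unique_point h.1 h.2.1 h.2.2).exists.choose
  else Classical.arbitrary _

lemma meetPt_spec {p : Submodule F (Fin 3 → F) × Submodule F (Fin 3 → F)}
    (h1 : IsHyp F p.1) (h2 : IsHyp F p.2) (hne : p.1 ≠ p.2) :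
    (meetPt p).submodule ≤ p.1 ∧ (meetPt p).submodule ≤ p.2 := by
  rw [meetPt, dif_pos ⟨h1, h2, hne⟩]
  exact (exists_unique_point h1 h2 hne).exists.choose_spec

section ExtPoint

variable (hq : Fintype.card F = q) (hr3 : 3 ≤ r) (hrq : r < q) (hdvd : r ∣ q)
  {K : Finset (Projectivization F (Fin 3 → F))}
  (hcard : K.card = (r - 1) * (q + 1))
  (hmax : ∀ W : Submodule F (Fin 3 → F), IsHyp F W → pointsOn K W ≤ r)

include hq hr3 hrq hdvd hcard hmax

lemma b_ge_one {Q : Projectivization F (Fin 3 → F)} (hQ : Q ∉ K) :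
    1 ≤ ((tSet K r).filter (fun W => Q.submodule ≤ W)).card := by
  rw [Nat.one_le_iff_ne_zero]
  intro hb0
  -- all lines through Q have pointsOn ∈ {0, r}; sum over pencil = K.card
  have hsum := sum_pencil hq K Q
  rw [if_neg hQ, hcard, add_zero] at hsum
  have hnotm : ∀ W ∈ pencil Q, pointsOn K W ≠ r - 1 := by
    intro W hW hv
    have hWh := ((Finset.mem_filter.1 hW).2).1
    have hWQ := ((Finset.mem_filter.1 hW).2).2
    have : W ∈ (tSet K r).filter (fun W => Q.submodule ≤ W) := by
      simp only [tSet, Finset.mem_filter, Finset.mem_univ, true_and]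
      exact ⟨⟨hWh, hv⟩, hWQ⟩
    exact absurd (Finset.card_ne_zero_of_mem this) (by omega)
  -- sum over pencil Q = (number of r-lines) * r
  set A := (pencil Q).filter (fun W => pointsOn K W = r) with hA
  have hsum2 : ∑ W ∈ pencil Q, pointsOn K W = A.card * r := by
    rw [← Finset.sum_filter_add_sum_filter_not (pencil Q) (fun W => pointsOn K W = r)]
    have h1 : ∑ W ∈ A, pointsOn K W = A.card * r := by
      rw [Finset.sum_congr rfl (fun W hW => (Finset.mem_filter.1 hW).2), Finset.sum_const,
        smul_eq_mul]
    have h2 : ∑ W ∈ (pencil Q).filter (fun W => ¬pointsOn K W = r), pointsOn K W = 0 := by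
      apply Finset.sum_eq_zero
      intro W hW
      obtain ⟨hWp, hWne⟩ := Finset.mem_filter.1 hW
      rcases trichotomy hq hr3 hcard hmax ((Finset.mem_filter.1 hWp).2).1 with h | h | h
      · exact h
      · exact absurd h (hnotm W hWp)
      · exact absurd h hWne
    rw [h1, h2, add_zero]
  rw [hsum2] at hsum
  -- r ∣ (r-1) * (q+1), coprime, so r ∣ q + 1; but r ∣ q, contradiction
  have hdd : r ∣ (r - 1) * (q + 1) := hsum ▸ dvd_mul_left r A.card
  have hcop : Nat.Coprime r (r - 1) := by
    obtain ⟨r', rfl⟩ : ∃ r', r = r' + 1 := ⟨r - 1, by omega⟩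
    simp [Nat.Coprime, Nat.succ_sub_one, Nat.gcd_comm]
  have hq1 : r ∣ q + 1 := hcop.dvd_of_dvd_mul_left hdd
  have hr1 : r ∣ 1 := by
    have := Nat.dvd_sub hq1 hdvd
    simpa using this
  have := Nat.le_of_dvd one_pos hr1
  omega

lemma ext_point :
    ∃ Q : Projectivization F (Fin 3 → F), Q ∉ K ∧
      ∀ W : Submodule F (Fin 3 → F), IsHyp F W → Q.submodule ≤ W → pointsOn K W = r - 1 := by
  classical
  set X : Finset (Projectivization F (Fin 3 → F)) := univ \ K with hX
  set b : Projectivization F (Fin 3 → F) → ℕ :=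
    fun Q => ((tSet K r).filter (fun W => Q.submodule ≤ W)).card with hb
  have hTcard := tSet_card hq hr3 hcard hmax
  have hXmem : ∀ Q, Q ∈ X ↔ Q ∉ K := by
    intro Q; simp [hX]
  -- b Q ≤ pencil card
  have hble : ∀ Q, b Q ≤ q + 1 := by
    intro Q
    rw [← pencil_card hq Q]
    apply Finset.card_le_card
    intro W hW
    obtain ⟨hWt, hWQ⟩ := Finset.mem_filter.1 hW
    obtain ⟨-, hWh, -⟩ := Finset.mem_filter.1 hWt
    exact Finset.mem_filter.2 ⟨Finset.mem_univ _, hWh, hWQ⟩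
  have hbge : ∀ Q ∈ X, 1 ≤ b Q := fun Q hQ =>
    b_ge_one hq hr3 hrq hdvd hcard hmax ((hXmem Q).1 hQ)
  -- sum of b over X
  have hsumb : ∑ Q ∈ X, b Q = (q + 1) * ((q + 1) - (r - 1)) := by
    have hdc := double_count X (tSet K r)
    have hlhs : ∀ W ∈ tSet K r, pointsOn X W = (q + 1) - (r - 1) := by
      intro W hW
      obtain ⟨hWh, hWv⟩ : IsHyp F W ∧ pointsOn K W = r - 1 := by simpa [tSet] using hW
      have hsplit : X.filter (fun P => P.submodule ≤ W)
          = (univ.filter (fun P : Projectivization F (Fin 3 → F) => P.submodule ≤ W))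
            \ (K.filter (fun P => P.submodule ≤ W)) := by
        ext P
        simp only [hX, Finset.mem_sdiff, Finset.mem_filter, Finset.mem_univ, true_and]
        tauto
      rw [pointsOn, hsplit, Finset.card_sdiff_of_subset (Finset.filter_subset_filter _ (Finset.subset_univ K))]
      rw [show (univ.filter (fun P : Projectivization F (Fin 3 → F) => P.submodule ≤ W)).card
          = q + 1 from pointsOn_line hq hWh]
      rw [show (K.filter (fun P => P.submodule ≤ W)).card = r - 1 from hWv]
    rw [Finset.sum_congr rfl hlhs, Finset.sum_const, smul_eq_mul, hTcard] at hdc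
    exact hdc.symm
  have hXcard : X.card + (r - 1) * (q + 1) = q ^ 2 + q + 1 := by
    rw [hX, Finset.card_sdiff_of_subset (Finset.subset_univ K), card_pts hq, hcard]
    have hKle : K.card ≤ (univ : Finset (Projectivization F (Fin 3 → F))).card :=
      Finset.card_le_card (Finset.subset_univ K)
    rw [card_pts hq, hcard] at hKle
    omega
  -- suppose no extension point
  by_contra hno
  push_neg at hno
  have hbq : ∀ Q ∈ X, b Q ≤ q := by
    intro Q hQ
    by_contra hgt
    have hbeq : b Q = q + 1 := by have := hble Q; omega
    -- then every line through Q is in tSet, contradiction with hno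
    have hQK := (hXmem Q).1 hQ
    obtain ⟨W, hWh, hWQ, hWv⟩ := hno Q hQK
    have hsub : (tSet K r).filter (fun W => Q.submodule ≤ W) ⊆ pencil Q := by
      intro W' hW'
      simp only [tSet, pencil, Finset.mem_filter, Finset.mem_univ, true_and] at *
      exact ⟨hW'.1.1, hW'.2⟩
    have heq : (tSet K r).filter (fun W => Q.submodule ≤ W) = pencil Q := by
      apply Finset.eq_of_subset_of_card_le hsub
      rw [pencil_card hq]
      exact le_of_eq hbeq.symm
    have hWp : W ∈ pencil Q := by
      simp only [pencil, Finset.mem_filter, Finset.mem_univ, true_and]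
      exact ⟨hWh, hWQ⟩
    rw [← heq] at hWp
    exact hWv (Finset.mem_filter.1 (Finset.mem_filter.1 hWp).1).2.2
  -- double count pairs of tangent lines
  set D := (tSet K r).offDiag with hD
  have hmaps : ∀ p ∈ D, meetPt p ∈ X := by
    intro p hp
    obtain ⟨hp1, hp2, hpne⟩ := Finset.mem_offDiag.1 hp
    have h1 : IsHyp F p.1 := (Finset.mem_filter.1 hp1).2.1
    have h2 : IsHyp F p.2 := (Finset.mem_filter.1 hp2).2.1
    obtain ⟨hm1, hm2⟩ := meetPt_spec h1 h2 hpne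
    rw [hXmem]
    intro hmK
    have hsub2 : ({p.1, p.2} : Finset (Submodule F (Fin 3 → F)))
        ⊆ (tSet K r).filter (fun W => (meetPt p).submodule ≤ W) := by
      intro W hW
      rcases Finset.mem_insert.1 hW with rfl | hW
      · exact Finset.mem_filter.2 ⟨hp1, hm1⟩
      · rw [Finset.mem_singleton.1 hW]
        exact Finset.mem_filter.2 ⟨hp2, hm2⟩
    have h2c : ({p.1, p.2} : Finset (Submodule F (Fin 3 → F))).card = 2 := by
      rw [Finset.card_insert_of_notMem (by simpa using hpne), Finset.card_singleton]
    have := Finset.card_le_card hsub2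
    rw [h2c, tSet_point_filter hq hr3 hcard hmax hmK] at this
    omega
  have hDcard : D.card = (q + 1) * (q + 1) - (q + 1) := by
    rw [hD, Finset.offDiag_card, hTcard]
  have hfib : ∀ Q ∈ X, (D.filter (fun p => meetPt p = Q)).card ≤ b Q * b Q - b Q := by
    intro Q hQ
    have hsub3 : D.filter (fun p => meetPt p = Q)
        ⊆ ((tSet K r).filter (fun W => Q.submodule ≤ W)).offDiag := by
      intro p hp
      obtain ⟨hpD, hpQ⟩ := Finset.mem_filter.1 hp
      obtain ⟨hp1, hp2, hpne⟩ := Finset.mem_offDiag.1 hpD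
      have h1 : IsHyp F p.1 := (Finset.mem_filter.1 hp1).2.1
      have h2 : IsHyp F p.2 := (Finset.mem_filter.1 hp2).2.1
      obtain ⟨hm1, hm2⟩ := meetPt_spec h1 h2 hpne
      rw [hpQ] at hm1 hm2
      exact Finset.mem_offDiag.2 ⟨Finset.mem_filter.2 ⟨hp1, hm1⟩,
        Finset.mem_filter.2 ⟨hp2, hm2⟩, hpne⟩
    have := Finset.card_le_card hsub3
    rwa [Finset.offDiag_card] at this
  have hDsum := Finset.card_eq_sum_card_fiberwise hmaps
  -- final contradiction by counting
  have hsum1 : ∑ Q ∈ X, (b Q * b Q - b Q) ≤ ∑ Q ∈ X, q * (b Q - 1) := by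
    apply Finset.sum_le_sum
    intro Q hQ
    have h1 := hbq Q hQ
    have h2 := hbge Q hQ
    have e1 : b Q * b Q - b Q = b Q * (b Q - 1) := by
      obtain ⟨c, hc⟩ : ∃ c, b Q = c + 1 := ⟨b Q - 1, by omega⟩
      rw [hc]
      have e : (c + 1) * (c + 1) = (c + 1) * c + (c + 1) := by ring
      simp [e, Nat.add_sub_cancel]
    rw [e1]
    exact Nat.mul_le_mul_right _ h1
  have hsub1 : ∑ Q ∈ X, (b Q - 1) + X.card = ∑ Q ∈ X, b Q := by
    have h := Finset.sum_congr rfl (fun Q hQ => Nat.sub_add_cancel (hbge Q hQ))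
    rw [Finset.sum_add_distrib, Finset.sum_const, smul_eq_mul, mul_one] at h
    exact h
  have hq2 : 2 ≤ q := hq ▸ Fintype.one_lt_card
  have hkey : ∑ Q ∈ X, (b Q - 1) = q := by
    have e2 : (q + 1) * ((q + 1) - (r - 1)) + (r - 1) * (q + 1) = (q + 1) * (q + 1) := by
      have e : (q + 1) - (r - 1) + (r - 1) = q + 1 := by omega
      calc (q + 1) * ((q + 1) - (r - 1)) + (r - 1) * (q + 1)
          = (q + 1) * (((q + 1) - (r - 1)) + (r - 1)) := by ring
        _ = (q + 1) * (q + 1) := by rw [e]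
    have e3 : (q + 1) * (q + 1) = q ^ 2 + 2 * q + 1 := by ring
    linarith
  have hle2 : D.card ≤ q * q := by
    rw [hDsum]
    calc ∑ Q ∈ X, (D.filter (fun p => meetPt p = Q)).card
        ≤ ∑ Q ∈ X, (b Q * b Q - b Q) := Finset.sum_le_sum hfib
      _ ≤ ∑ Q ∈ X, q * (b Q - 1) := hsum1
      _ = q * ∑ Q ∈ X, (b Q - 1) := by rw [Finset.mul_sum]
      _ = q * q := by rw [hkey]
  have e4 : (q + 1) * (q + 1) - (q + 1) = q * (q + 1) := by
    have e : (q + 1) * (q + 1) = q * (q + 1) + (q + 1) := by ring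
    simp [e, Nat.add_sub_cancel]
  rw [hDcard, e4] at hle2
  have e5 : q * (q + 1) = q * q + q := by ring
  linarith

end ExtPoint

end ArcAux

namespace ArcAux

variable {F : Type*} [Field F] [Fintype F] {q r : ℕ}

lemma pointsOn_insert {K : Finset (Projectivization F (Fin 3 → F))}
    {Q : Projectivization F (Fin 3 → F)} (hQ : Q ∉ K) (W : Submodule F (Fin 3 → F)) :
    pointsOn (insert Q K) W = pointsOn K W + if Q.submodule ≤ W then 1 else 0 := by
  rw [pointsOn, pointsOn, Finset.filter_insert]
  split_ifs with h
  · rw [Finset.card_insert_of_notMem (fun hm => hQ (Finset.mem_filter.1 hm).1)]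
  · rw [add_zero]

lemma extendable (hq : Fintype.card F = q) (hr3 : 3 ≤ r) (hrq : r < q) (hdvd : r ∣ q)
    {K : Finset (Projectivization F (Fin 3 → F))}
    (hcard : K.card = (r - 1) * (q + 1))
    (hmax : ∀ W : Submodule F (Fin 3 → F), IsHyp F W → pointsOn K W ≤ r) :
    ∃ Q ∉ K, IsArc ((r - 1) * (q + 1) + 1) r (insert Q K) := by
  obtain ⟨Q, hQK, hQall⟩ := ext_point hq hr3 hrq hdvd hcard hmax
  have hq2 : 2 ≤ q := hq ▸ Fintype.one_lt_card
  refine ⟨Q, hQK, ?_, ?_, ?_, ?_⟩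
  · rw [Finset.card_insert_of_notMem hQK, hcard]
  · have h1 : (r - 1) * 2 ≤ (r - 1) * (q + 1) := Nat.mul_le_mul_left _ (by omega)
    have e : r - 1 + 1 = r := by omega
    linarith
  · intro W hW
    rw [pointsOn_insert hQK]
    split_ifs with h
    · rw [hQall W hW h]; omega
    · have := hmax W hW; omega
  · have hpos : 0 < (pencil Q).card := by rw [pencil_card hq]; omega
    obtain ⟨W, hWp⟩ := Finset.card_pos.1 hpos
    obtain ⟨-, hWh, hWQ⟩ := Finset.mem_filter.1 hWp
    refine ⟨W, hWh, ?_⟩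
    rw [pointsOn_insert hQK, if_pos hWQ, hQall W hWh hWQ]
    omega

end ArcAux


/-- If `0 < s < q - 2`, `(s+2) ∣ q` and `m^s(3,q) ≥ (s+1)(q+1)`, then
`m^s(3,q) = (s+1)(q+1) + 1`. -/
theorem stmt2 {F : Type*} [Field F] [Fintype F] {q s : ℕ}
    (hq : Fintype.card F = q) (hs0 : 0 < s) (hs : s < q - 2)
    (hdvd : (s + 2) ∣ q)
    (hge : (s + 1) * (q + 1) ≤ mPow F 3 s) :
    mPow F 3 s = (s + 1) * (q + 1) + 1 := by
  classical
  have hq2 : 2 ≤ q := hq ▸ Fintype.one_lt_card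
  have hq4 : 4 ≤ q := by omega
  have hkeq : 3 + s - 1 = s + 2 := by omega
  have hr1 : s + 2 - 1 = s + 1 := rfl
  set S := {n | ∃ K : Finset (Projectivization F (Fin 3 → F)), IsCompleteArc n (3 + s - 1) K}
    with hS
  have hmPow : mPow F 3 s = sSup S := rfl
  have hub : ∀ n ∈ S, n ≤ (s + 1) * (q + 1) + 1 := by
    rintro n ⟨K, ⟨hKcard, hKlt, hKmax, -⟩, -⟩
    rw [hkeq] at hKlt hKmax
    have hKne : K.Nonempty := Finset.card_pos.1 (by omega)
    have h := ArcAux.arc_card_le hq (r := s + 2) (by omega) hKne hKmax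
    rw [hKcard, hr1] at h
    exact h
  have hSne : S.Nonempty := by
    by_contra h
    rw [Set.not_nonempty_iff_eq_empty] at h
    rw [hmPow, h, csSup_empty] at hge
    have h0 : 0 < (s + 1) * (q + 1) := Nat.mul_pos (by omega) (by omega)
    simp only [Nat.bot_eq_zero, Nat.le_zero] at hge
    omega
  have hbdd : BddAbove S := ⟨(s + 1) * (q + 1) + 1, fun n hn => hub n hn⟩
  have hmem : sSup S ∈ S := Nat.sSup_mem hSne hbdd
  have hle : sSup S ≤ (s + 1) * (q + 1) + 1 := hub _ hmem
  rw [hmPow] at hge ⊢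
  rcases eq_or_lt_of_le hle with heq | hlt
  · exact heq
  · exfalso
    have hn₀ : sSup S = (s + 1) * (q + 1) := by omega
    rw [hn₀] at hmem
    obtain ⟨K, ⟨hKcard, hKlt, hKmax, hKex⟩, hKcomp⟩ := hmem
    rw [hkeq] at hKlt hKmax hKex
    have hcard' : K.card = (s + 2 - 1) * (q + 1) := by rw [hKcard, hr1]
    obtain ⟨Q, hQK, hQarc⟩ :=
      ArcAux.extendable hq (by omega) (by omega) hdvd hcard' hKmax
    rw [hr1] at hQarc
    apply hKcomp Q hQK
    rw [hkeq]
    exact hQarc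


end
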